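/- Let p and q be real polynomials, each of degree at least one, and let α ≥ 0. Then the number of real zeros (counted with multiplicity) of f(x) = q(x)·p'(x) + α·q'(x)·p(x) is at least Z_R(p) + Z_R(q) − 1, where Z_R denotes the number of real zeros counted with multiplicity. -/

import Mathlib

open Polynomial Finset

open scoped Classical in
/-- Number of non-real complex zeros of a real polynomial, counted with multiplicity. -/
noncomputable def ZC (p : Polynomial ℝ) : ℕ :=
  (((p.map (algebraMap ℝ ℂ)).roots).filter (fun z => z.im ≠ 0)).card

/-- Number of real zeros of a real polynomial, counted with multiplicity. -/
noncomputable def ZR (p : Polynomial ℝ) : ℕ := p.roots.card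

lemma exists_root_of_sign_change (g : Polynomial ℝ) {x y t s : ℝ}
    (ht : t ∈ Set.Ioo x y) (hs : s ∈ Set.Ioo x y)
    (hgt : 0 < eval t g) (hgs : eval s g < 0) :
    ∃ c ∈ Set.Ioo x y, eval c g = 0 := by
  rcases lt_trichotomy t s with hts | hts | hts
  · have hsub : Set.Icc t s ⊆ Set.Ioo x y := Set.Icc_subset_Ioo ht.1 hs.2
    have h0 : (0:ℝ) ∈ Set.Icc (eval s g) (eval t g) := ⟨hgs.le, hgt.le⟩
    obtain ⟨c, hc, hc0⟩ := intermediate_value_Icc' hts.le (g.continuousOn.mono hsub) h0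
    exact ⟨c, hsub hc, hc0⟩
  · exact absurd (hts ▸ hgt) (asymm hgs)
  · have hsub : Set.Icc s t ⊆ Set.Ioo x y := Set.Icc_subset_Ioo hs.1 ht.2
    have h0 : (0:ℝ) ∈ Set.Icc (eval s g) (eval t g) := ⟨hgs.le, hgt.le⟩
    obtain ⟨c, hc, hc0⟩ := intermediate_value_Icc hts.le (g.continuousOn.mono hsub) h0
    exact ⟨c, hsub hc, hc0⟩

/-- Constant sign of a polynomial on an interval where it has no roots. -/
lemma sign_const_on_Ioo (g : Polynomial ℝ) {x y : ℝ} (hxy : x < y)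
    (h : ∀ t ∈ Set.Ioo x y, eval t g ≠ 0) :
    ∃ ε : ℝ, (ε = 1 ∨ ε = -1) ∧ ∀ t ∈ Set.Ioo x y, 0 < ε * eval t g := by
  have ht₀m : (x + y) / 2 ∈ Set.Ioo x y := ⟨by linarith, by linarith⟩
  rcases lt_or_gt_of_ne (h _ ht₀m) with hneg | hpos
  · refine ⟨-1, Or.inr rfl, fun t ht => ?_⟩
    rcases lt_or_gt_of_ne (h t ht) with h1 | h1
    · nlinarith
    · obtain ⟨c, hc, hc0⟩ := exists_root_of_sign_change g ht ht₀m h1 hneg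
      exact absurd hc0 (h c hc)
  · refine ⟨1, Or.inl rfl, fun t ht => ?_⟩
    rcases lt_or_gt_of_ne (h t ht) with h1 | h1
    · obtain ⟨c, hc, hc0⟩ := exists_root_of_sign_change g ht₀m ht hpos h1
      exact absurd hc0 (h c hc)
    · nlinarith

/-- Generalized Rolle-type root counting, following the proof of
`Polynomial.card_roots_le_derivative` in Mathlib. -/
lemma card_roots_le_of_interleaved (P f : Polynomial ℝ) (hP : P ≠ 0) (hf : f ≠ 0)
    (h1 : ∀ x ∈ P.roots.toFinset, P.rootMultiplicity x - 1 ≤ f.rootMultiplicity x)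
    (h2 : ∀ x ∈ P.roots.toFinset, ∀ y ∈ P.roots.toFinset, x < y →
      (∀ z ∈ P.roots.toFinset, z ∉ Set.Ioo x y) → ∃ z, f.IsRoot z ∧ x < z ∧ z < y) :
    Multiset.card P.roots ≤ Multiset.card f.roots + 1 := by
  have interleave : P.roots.toFinset.card ≤ (f.roots.toFinset \ P.roots.toFinset).card + 1 := by
    refine Finset.card_le_diff_of_interleaved fun x hx y hy hxy hxy' => ?_
    obtain ⟨z, hz1, hz2, hz3⟩ := h2 x hx y hy hxy hxy'
    exact ⟨z, Multiset.mem_toFinset.2 ((mem_roots hf).2 hz1), hz2, hz3⟩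
  calc
    Multiset.card P.roots = ∑ x ∈ P.roots.toFinset, P.roots.count x :=
      (Multiset.toFinset_sum_count_eq _).symm
    _ = ∑ x ∈ P.roots.toFinset, (P.roots.count x - 1 + 1) :=
      (Eq.symm <| Finset.sum_congr rfl fun _ hx => tsub_add_cancel_of_le <|
        Nat.succ_le_iff.2 <| Multiset.count_pos.2 <| Multiset.mem_toFinset.1 hx)
    _ = (∑ x ∈ P.roots.toFinset, (P.rootMultiplicity x - 1)) + P.roots.toFinset.card := by
      simp only [Finset.sum_add_distrib, Finset.card_eq_sum_ones, count_roots]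
    _ ≤ (∑ x ∈ P.roots.toFinset, f.rootMultiplicity x) +
          ((f.roots.toFinset \ P.roots.toFinset).card + 1) :=
      add_le_add (Finset.sum_le_sum h1) interleave
    _ ≤ (∑ x ∈ P.roots.toFinset, f.roots.count x) +
          ((∑ x ∈ f.roots.toFinset \ P.roots.toFinset, f.roots.count x) + 1) := by
      simp only [← count_roots]
      refine add_le_add_right (add_le_add_left ((Finset.card_eq_sum_ones _).trans_le ?_) _) _
      refine Finset.sum_le_sum fun x hx => Nat.succ_le_iff.2 <| ?_
      rw [Multiset.count_pos, ← Multiset.mem_toFinset]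
      exact (Finset.mem_sdiff.1 hx).1
    _ = Multiset.card f.roots + 1 := by
      rw [← add_assoc, ← Finset.sum_union Finset.disjoint_sdiff, Finset.union_sdiff_self_eq_union,
        ← Multiset.toFinset_sum_count_eq, ← Finset.sum_subset Finset.subset_union_right]
      intro x _ hx₂
      simpa only [Multiset.mem_toFinset, Multiset.count_eq_zero] using hx₂

theorem stmt0 (p q : Polynomial ℝ) (hp : 1 ≤ p.natDegree) (hq : 1 ≤ q.natDegree)
    (α : ℝ) (hα : 0 ≤ α) :
    ZR p + ZR q - 1 ≤ ZR (q * derivative p + C α * (derivative q * p)) := by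
  have hp0 : p ≠ 0 := fun h => by simp [h] at hp
  have hq0 : q ≠ 0 := fun h => by simp [h] at hq
  have hp'0 : derivative p ≠ 0 := fun h => by
    have := natDegree_eq_zero_of_derivative_eq_zero h; omega
  have hq'0 : derivative q ≠ 0 := fun h => by
    have := natDegree_eq_zero_of_derivative_eq_zero h; omega
  rcases eq_or_lt_of_le hα with hα0 | hα0
  · -- α = 0 : f = q * p'
    subst hα0
    simp only [map_zero, zero_mul, add_zero]
    have hqp' : q * derivative p ≠ 0 := mul_ne_zero hq0 hp'0
    have h1 : ZR (q * derivative p) = ZR q + ZR (derivative p) := by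
      simp [ZR, roots_mul hqp']
    have h2 := p.card_roots_le_derivative
    simp only [ZR] at *
    omega
  -- α > 0
  set f := q * derivative p + C α * (derivative q * p) with hfdef
  -- degree bookkeeping for f ≠ 0
  have hdp' : (derivative p).natDegree = p.natDegree - 1 := by
    refine le_antisymm (natDegree_derivative_le p) (le_natDegree_of_ne_zero ?_)
    rw [coeff_derivative]
    have h1 : p.natDegree - 1 + 1 = p.natDegree := by omega
    rw [h1, coeff_natDegree]
    have : (p.natDegree : ℝ) ≥ 1 := by exact_mod_cast hp
    have hlc : p.leadingCoeff ≠ 0 := leadingCoeff_ne_zero.2 hp0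
    push_cast
    intro hcon
    apply hlc
    have : (p.natDegree - 1 : ℕ) + (1:ℝ) = (p.natDegree : ℝ) := by push_cast [Nat.cast_sub hp]; ring
    nlinarith [this]
  have hdq' : (derivative q).natDegree = q.natDegree - 1 := by
    refine le_antisymm (natDegree_derivative_le q) (le_natDegree_of_ne_zero ?_)
    rw [coeff_derivative]
    have h1 : q.natDegree - 1 + 1 = q.natDegree := by omega
    rw [h1, coeff_natDegree]
    have : (q.natDegree : ℝ) ≥ 1 := by exact_mod_cast hq
    have hlc : q.leadingCoeff ≠ 0 := leadingCoeff_ne_zero.2 hq0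
    intro hcon
    apply hlc
    nlinarith [mul_eq_zero.mp hcon]
  have hf0 : f ≠ 0 := by
    intro hcon
    have hD : f.coeff (p.natDegree + q.natDegree - 1) = 0 := by rw [hcon]; simp
    have e1 : q.natDegree + (derivative p).natDegree = p.natDegree + q.natDegree - 1 := by
      rw [hdp']; omega
    have e2 : (derivative q).natDegree + p.natDegree = p.natDegree + q.natDegree - 1 := by
      rw [hdq']; omega
    have c1 : (q * derivative p).coeff (p.natDegree + q.natDegree - 1)
        = q.leadingCoeff * (p.leadingCoeff * p.natDegree) := by
      rw [← e1, coeff_mul_degree_add_degree]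
      congr 1
      rw [leadingCoeff, hdp', coeff_derivative]
      have h1 : p.natDegree - 1 + 1 = p.natDegree := by omega
      rw [h1, coeff_natDegree]
      push_cast [Nat.cast_sub hp]
      ring
    have c2 : (derivative q * p).coeff (p.natDegree + q.natDegree - 1)
        = (q.leadingCoeff * q.natDegree) * p.leadingCoeff := by
      rw [← e2, coeff_mul_degree_add_degree]
      congr 1
      rw [leadingCoeff, hdq', coeff_derivative]
      have h1 : q.natDegree - 1 + 1 = q.natDegree := by omega
      rw [h1, coeff_natDegree]
      push_cast [Nat.cast_sub hq]
      ring
    rw [hfdef, coeff_add, coeff_C_mul, c1, c2] at hD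
    have hlcp : p.leadingCoeff ≠ 0 := leadingCoeff_ne_zero.2 hp0
    have hlcq : q.leadingCoeff ≠ 0 := leadingCoeff_ne_zero.2 hq0
    have hm : (1:ℝ) ≤ (p.natDegree : ℝ) := by exact_mod_cast hp
    have hn : (1:ℝ) ≤ (q.natDegree : ℝ) := by exact_mod_cast hq
    have : p.leadingCoeff * q.leadingCoeff * ((p.natDegree : ℝ) + α * q.natDegree) = 0 := by
      linarith [hD]
    rcases mul_eq_zero.mp this with h | h
    · exact (mul_ne_zero hlcp hlcq) h
    · nlinarith
  have hPQ : p * q ≠ 0 := mul_ne_zero hp0 hq0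
  -- multiplicity bound
  have h1 : ∀ x ∈ (p * q).roots.toFinset,
      (p * q).rootMultiplicity x - 1 ≤ f.rootMultiplicity x := by
    intro x _
    rw [rootMultiplicity_mul hPQ]
    set m := p.rootMultiplicity x
    set n := q.rootMultiplicity x
    rw [le_rootMultiplicity_iff hf0]
    have dvd1 : (X - C x) ^ (m + n - 1) ∣ q * derivative p := by
      have d1 : (X - C x) ^ n ∣ q := pow_rootMultiplicity_dvd q x
      have d2 : (X - C x) ^ (m - 1) ∣ derivative p :=
        dvd_trans (pow_dvd_pow _ (p.rootMultiplicity_sub_one_le_derivative_rootMultiplicity x))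
          (pow_rootMultiplicity_dvd (derivative p) x)
      have := mul_dvd_mul d1 d2
      rw [← pow_add] at this
      exact dvd_trans (pow_dvd_pow _ (by omega)) this
    have dvd2 : (X - C x) ^ (m + n - 1) ∣ C α * (derivative q * p) := by
      have d1 : (X - C x) ^ (n - 1) ∣ derivative q :=
        dvd_trans (pow_dvd_pow _ (q.rootMultiplicity_sub_one_le_derivative_rootMultiplicity x))
          (pow_rootMultiplicity_dvd (derivative q) x)
      have d2 : (X - C x) ^ m ∣ p := pow_rootMultiplicity_dvd p x
      have := mul_dvd_mul d1 d2
      rw [← pow_add] at this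
      exact Dvd.dvd.mul_left (dvd_trans (pow_dvd_pow _ (by omega)) this) _
    exact dvd_add dvd1 dvd2
  -- interleaving via the max of |p| |q|^α
  have h2 : ∀ x ∈ (p * q).roots.toFinset, ∀ y ∈ (p * q).roots.toFinset, x < y →
      (∀ z ∈ (p * q).roots.toFinset, z ∉ Set.Ioo x y) → ∃ z, f.IsRoot z ∧ x < z ∧ z < y := by
    intro x hx y hy hxy hbetween
    have hroot : ∀ t ∈ Set.Ioo x y, eval t p ≠ 0 ∧ eval t q ≠ 0 := by
      intro t ht
      have : t ∉ (p * q).roots.toFinset := fun hmem => hbetween t hmem ht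
      rw [Multiset.mem_toFinset, mem_roots hPQ] at this
      constructor <;> intro h0 <;> exact this (by simp [IsRoot, h0])
    obtain ⟨e1, he1, hppos⟩ := sign_const_on_Ioo p hxy (fun t ht => (hroot t ht).1)
    obtain ⟨e2, he2, hqpos⟩ := sign_const_on_Ioo q hxy (fun t ht => (hroot t ht).2)
    set v : ℝ → ℝ := fun t => (e1 * eval t p) * (e2 * eval t q) ^ α with hv
    have hcont : Continuous v := by
      apply Continuous.mul
      · exact continuous_const.mul p.continuous
      · exact (continuous_const.mul q.continuous).rpow_const (fun t => Or.inr hα)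
    have hend : ∀ z, IsRoot (p * q) z → v z = 0 := by
      intro z hz
      have hz' : eval z p = 0 ∨ eval z q = 0 := by simpa [IsRoot] using hz
      rcases hz' with h0 | h0
      · simp [hv, h0]
      · simp [hv, h0, Real.zero_rpow hα0.ne']
    have hvx : v x = 0 := hend x (by rwa [Multiset.mem_toFinset, mem_roots hPQ] at hx)
    have hvy : v y = 0 := hend y (by rwa [Multiset.mem_toFinset, mem_roots hPQ] at hy)
    have hvpos : ∀ t ∈ Set.Ioo x y, 0 < v t := fun t ht =>
      mul_pos (hppos t ht) (Real.rpow_pos_of_pos (hqpos t ht) α)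
    have ht₀ : (x + y) / 2 ∈ Set.Ioo x y := ⟨by linarith, by linarith⟩
    obtain ⟨c, hc, hmax⟩ := isCompact_Icc.exists_isMaxOn (Set.nonempty_Icc.2 hxy.le)
      hcont.continuousOn (f := v)
    have hvc : 0 < v c := lt_of_lt_of_le (hvpos _ ht₀) (hmax (Set.Ioo_subset_Icc_self ht₀))
    have hcx : x < c := lt_of_le_of_ne hc.1 (fun h => by rw [← h, hvx] at hvc; exact lt_irrefl _ hvc)
    have hcy : c < y := lt_of_le_of_ne hc.2 (fun h => by rw [h, hvy] at hvc; exact lt_irrefl _ hvc)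
    have hloc : IsLocalMax v c := hmax.isLocalMax (Icc_mem_nhds hcx hcy)
    have hA : 0 < e2 * eval c q := hqpos c ⟨hcx, hcy⟩
    have hd1 : HasDerivAt (fun t => e1 * eval t p) (e1 * eval c (derivative p)) c :=
      (p.hasDerivAt c).const_mul e1
    have hdu : HasDerivAt (fun t => e2 * eval t q) (e2 * eval c (derivative q)) c :=
      (q.hasDerivAt c).const_mul e2
    have hd2 : HasDerivAt (fun t => (e2 * eval t q) ^ α)
        (α * (e2 * eval c q) ^ (α - 1) * (e2 * eval c (derivative q))) c :=
      by exact (Real.hasDerivAt_rpow_const (x := e2 * eval c q) (p := α) (Or.inl hA.ne')).comp c hdu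
    have hdv : HasDerivAt v
        (e1 * eval c (derivative p) * ((e2 * eval c q) ^ α)
          + (e1 * eval c p) * (α * (e2 * eval c q) ^ (α - 1) * (e2 * eval c (derivative q)))) c :=
      hd1.mul hd2
    have hD0 := hloc.hasDerivAt_eq_zero hdv
    have hApow : (e2 * eval c q) ^ α = (e2 * eval c q) ^ (α - 1) * (e2 * eval c q) := by
      rw [← Real.rpow_add_one hA.ne']
      ring_nf
    rw [hApow] at hD0
    have key : (e2 * eval c q) ^ (α - 1) * (e1 * e2)
        * (eval c q * eval c (derivative p) + α * (eval c (derivative q) * eval c p)) = 0 := by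
      rw [← hD0]; ring
    have hne : (e2 * eval c q) ^ (α - 1) * (e1 * e2) ≠ 0 := by
      have hB : (0:ℝ) < (e2 * eval c q) ^ (α - 1) := Real.rpow_pos_of_pos hA _
      have he12 : e1 * e2 ≠ 0 := by
        rcases he1 with h | h <;> rcases he2 with h' | h' <;> rw [h, h'] <;> norm_num
      exact mul_ne_zero hB.ne' he12
    have hfc : eval c q * eval c (derivative p) + α * (eval c (derivative q) * eval c p) = 0 :=
      (mul_eq_zero.mp key).resolve_left hne
    exact ⟨c, by simp [hfdef, IsRoot, hfc], hcx, hcy⟩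
  have hmain := card_roots_le_of_interleaved (p * q) f hPQ hf0 h1 h2
  have hsplit : Multiset.card (p * q).roots = ZR p + ZR q := by
    simp [ZR, roots_mul hPQ]
  simp only [ZR] at *
  omega
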